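/- Let v ≥ 1 and ℓ ≥ 0 be integers and d_1,…,d_v positive integers. For all s,t ∈ {1,…,v} let Φ_{s,t} ∈ ℝ^{d_s×d_t}, and for each s let Ψ_{s,s} ∈ ℝ^{d_s×d_s} be symmetric positive semidefinite. For each s let P_s ∈ ℝ^{d_s×ℓ} satisfy P_s^T P_s = I_ℓ and R(P_s) ⊆ R(Ψ_{s,s}). Define Π_s = I_{d_s} − P_s P_s^T, Φ_{s,t}^{(ℓ)} = Π_s Φ_{s,t} Π_t, Ψ_{s,s}^{(ℓ)} = Π_s Ψ_{s,s} Π_s, and for a tuple q = (q_1,…,q_v) with q_s ∈ ℝ^{d_s} define f(q) = Σ_{s=1}^v Σ_{t=1}^v q_s^T Φ_{s,t} q_t and f_ℓ(q) = Σ_{s=1}^v Σ_{t=1}^v q_s^T Φ_{s,t}^{(ℓ)} q_t. Then a tuple q satisfies [Σ_{s=1}^v q_s^T Ψ_{s,s} q_s = 1, q_s ∈ R(Ψ_{s,s}) for all s, and P_s^T q_s = 0 for all s] if and only if it satisfies [Σ_{s=1}^v q_s^T Ψ_{s,s}^{(ℓ)} q_s = 1 and q_s ∈ R(Ψ_{s,s}^{(ℓ)})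 for all s]; moreover, for every tuple q in this common feasible set, f(q) = f_ℓ(q). -/

import Mathlib

open Matrix BigOperators

/-- Range of `Aᵀ * A` equals range of `Aᵀ` (existence form). -/
lemma exists_mulVec_transpose_mul_self {m n : ℕ} (A : Matrix (Fin m) (Fin n) ℝ)
    (x : Fin n → ℝ) (hx : ∃ y, Aᵀ.mulVec y = x) : ∃ w, (Aᵀ * A).mulVec w = x := by
  have hle : LinearMap.range (Aᵀ * A).mulVecLin ≤ LinearMap.range Aᵀ.mulVecLin := by
    rintro z ⟨w, rfl⟩
    exact ⟨A.mulVec w, by simp [Matrix.mulVecLin_apply, Matrix.mulVec_mulVec]⟩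
  have heq : LinearMap.range (Aᵀ * A).mulVecLin = LinearMap.range Aᵀ.mulVecLin := by
    apply Submodule.eq_of_le_of_finrank_le hle
    have h1 : (Aᵀ * A).rank = A.rank := Matrix.rank_transpose_mul_self A
    have h2 : Aᵀ.rank = A.rank := Matrix.rank_transpose A
    simp only [Matrix.rank] at h1 h2
    rw [h1, h2]
  obtain ⟨y, hy⟩ := hx
  have hmem : x ∈ LinearMap.range Aᵀ.mulVecLin := ⟨y, hy⟩
  rw [← heq] at hmem
  exact hmem

/-- Theorem 1 (equivalence of the deflated problem): the feasible sets of the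
constrained problem (with orthogonality to previously computed columns) and of
the projected/deflated problem coincide, and the objectives `f` and `f_ℓ` agree
on this common feasible set. -/
theorem deflated_feasible_set_eq
    (v : ℕ) (hv : 1 ≤ v) (ℓ : ℕ) (d : Fin v → ℕ) (hd : ∀ s, 0 < d s)
    (Φ : ∀ s t : Fin v, Matrix (Fin (d s)) (Fin (d t)) ℝ)
    (Ψ : ∀ s : Fin v, Matrix (Fin (d s)) (Fin (d s)) ℝ)
    (hΨ : ∀ s, (Ψ s).PosSemidef)
    (P : ∀ s : Fin v, Matrix (Fin (d s)) (Fin ℓ) ℝ)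
    (hP : ∀ s, (P s)ᵀ * P s = 1)
    (hPR : ∀ s, ∀ x : Fin (d s) → ℝ,
      (∃ w, (P s).mulVec w = x) → ∃ w, (Ψ s).mulVec w = x)
    (Proj : ∀ s : Fin v, Matrix (Fin (d s)) (Fin (d s)) ℝ)
    (hProj : ∀ s, Proj s = 1 - P s * (P s)ᵀ)
    (Φℓ : ∀ s t : Fin v, Matrix (Fin (d s)) (Fin (d t)) ℝ)
    (hΦℓ : ∀ s t, Φℓ s t = Proj s * Φ s t * Proj t)
    (Ψℓ : ∀ s : Fin v, Matrix (Fin (d s)) (Fin (d s)) ℝ)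
    (hΨℓ : ∀ s, Ψℓ s = Proj s * Ψ s * Proj s)
    (q : ∀ s : Fin v, Fin (d s) → ℝ) :
    ((∑ s, q s ⬝ᵥ (Ψ s).mulVec (q s) = 1 ∧
        (∀ s, ∃ w, (Ψ s).mulVec w = q s) ∧
        (∀ s, (P s)ᵀ.mulVec (q s) = 0))
      ↔ (∑ s, q s ⬝ᵥ (Ψℓ s).mulVec (q s) = 1 ∧
          (∀ s, ∃ w, (Ψℓ s).mulVec w = q s)))
    ∧ ((∑ s, q s ⬝ᵥ (Ψ s).mulVec (q s) = 1 ∧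
        (∀ s, ∃ w, (Ψ s).mulVec w = q s) ∧
        (∀ s, (P s)ᵀ.mulVec (q s) = 0))
      → ∑ s, ∑ t, q s ⬝ᵥ (Φ s t).mulVec (q t)
          = ∑ s, ∑ t, q s ⬝ᵥ (Φℓ s t).mulVec (q t)) := by
  -- basic facts about the projections
  have hProjT : ∀ s, (Proj s)ᵀ = Proj s := by
    intro s
    rw [hProj, transpose_sub, transpose_one, transpose_mul, transpose_transpose]
  have hPTProj : ∀ s, (P s)ᵀ * Proj s = 0 := by
    intro s
    rw [hProj, Matrix.mul_sub, Matrix.mul_one, ← Matrix.mul_assoc, hP, Matrix.one_mul,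
      sub_self]
  have hProjP : ∀ s, Proj s * P s = 0 := by
    intro s
    rw [hProj, Matrix.sub_mul, Matrix.one_mul, Matrix.mul_assoc, hP, Matrix.mul_one,
      sub_self]
  have hProjProj : ∀ s, Proj s * Proj s = Proj s := by
    intro s
    have h0 : Proj s * (P s * (P s)ᵀ) = 0 := by
      rw [← Matrix.mul_assoc, hProjP, Matrix.zero_mul]
    calc Proj s * Proj s = Proj s * (1 - P s * (P s)ᵀ) := by rw [← hProj]
      _ = Proj s := by rw [Matrix.mul_sub, Matrix.mul_one, h0, sub_zero]
  -- orthogonality is equivalent to being fixed by the projection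
  have hfix : ∀ s, (P s)ᵀ.mulVec (q s) = 0 → (Proj s).mulVec (q s) = q s := by
    intro s h
    rw [hProj, Matrix.sub_mulVec, Matrix.one_mulVec, ← Matrix.mulVec_mulVec, h,
      Matrix.mulVec_zero, sub_zero]
  -- members of range Ψℓ are fixed by the projection and orthogonal to P
  have hfixℓ : ∀ s, (∃ w, (Ψℓ s).mulVec w = q s) → (Proj s).mulVec (q s) = q s := by
    intro s ⟨w, hw⟩
    have : Proj s * Ψℓ s = Ψℓ s := by
      rw [hΨℓ, ← Matrix.mul_assoc, ← Matrix.mul_assoc, hProjProj]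
    rw [← hw, Matrix.mulVec_mulVec, this]
  have horthℓ : ∀ s, (∃ w, (Ψℓ s).mulVec w = q s) → (P s)ᵀ.mulVec (q s) = 0 := by
    intro s hw
    have h1 := hfixℓ s hw
    rw [← h1, Matrix.mulVec_mulVec, hPTProj, Matrix.zero_mulVec]
  -- members of range Ψℓ are in range Ψ
  have hrange : ∀ s, (∃ w, (Ψℓ s).mulVec w = q s) → ∃ w, (Ψ s).mulVec w = q s := by
    intro s ⟨w, hw⟩
    set u := (Proj s).mulVec w with hu
    set y := (Ψ s).mulVec u with hy
    have hq : q s = y - (P s).mulVec ((P s)ᵀ.mulVec y) := by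
      rw [← hw, hΨℓ, ← Matrix.mulVec_mulVec, ← hu, ← Matrix.mulVec_mulVec, ← hy,
        hProj, Matrix.sub_mulVec, Matrix.one_mulVec, ← Matrix.mulVec_mulVec]
    obtain ⟨z, hz⟩ := hPR s ((P s).mulVec ((P s)ᵀ.mulVec y)) ⟨(P s)ᵀ.mulVec y, rfl⟩
    refine ⟨u - z, ?_⟩
    rw [Matrix.mulVec_sub, hz, ← hy, ← hq]
  -- hard direction : fixed + in range Ψ implies in range Ψℓ
  have hrange' : ∀ s, (∃ w, (Ψ s).mulVec w = q s) → (P s)ᵀ.mulVec (q s) = 0 →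
      ∃ w, (Ψℓ s).mulVec w = q s := by
    intro s ⟨w, hw⟩ horth
    have hfx := hfix s horth
    open scoped MatrixOrder in
    set S := CFC.sqrt (Ψ s) with hSdef
    open scoped MatrixOrder in
    have hS2 : S * S = Ψ s := CFC.sqrt_mul_sqrt_self (Ψ s) (hΨ s).nonneg
    have hSsym : Sᵀ = S := by
      open scoped MatrixOrder in
      have := (CFC.sqrt_nonneg (Ψ s)).posSemidef.isHermitian
      exact (Matrix.conjTranspose_eq_transpose_of_trivial S).symm.trans this
    set M := S * Proj s with hM
    have hMT : Mᵀ = Proj s * S := by rw [hM, transpose_mul, hProjT, hSsym]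
    have hMTM : Mᵀ * M = Ψℓ s := by
      rw [hMT, hM, hΨℓ, Matrix.mul_assoc, ← Matrix.mul_assoc S, hS2, Matrix.mul_assoc]
    have hqM : ∃ y, Mᵀ.mulVec y = q s := by
      refine ⟨S.mulVec w, ?_⟩
      rw [hMT, ← Matrix.mulVec_mulVec, Matrix.mulVec_mulVec (v := w), hS2, hw, hfx]
    obtain ⟨w', hw'⟩ := exists_mulVec_transpose_mul_self M (q s) hqM
    exact ⟨w', by rw [← hMTM]; exact hw'⟩
  -- quadratic forms agree when all components are fixed by the projections
  have hquad : ∀ (s t : Fin v) (A : Matrix (Fin (d s)) (Fin (d t)) ℝ),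
      (Proj s).mulVec (q s) = q s → (Proj t).mulVec (q t) = q t →
      q s ⬝ᵥ (Proj s * A * Proj t).mulVec (q t) = q s ⬝ᵥ A.mulVec (q t) := by
    intro s t A hs ht
    rw [← Matrix.mulVec_mulVec, ← Matrix.mulVec_mulVec, ht, Matrix.dotProduct_mulVec,
      ← Matrix.mulVec_transpose, hProjT, hs]
  refine ⟨⟨?_, ?_⟩, ?_⟩
  · rintro ⟨hsum, hr, ho⟩
    refine ⟨?_, fun s => hrange' s (hr s) (ho s)⟩
    rw [← hsum]
    refine Finset.sum_congr rfl fun s _ => ?_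
    rw [hΨℓ]
    exact hquad s s (Ψ s) (hfix s (ho s)) (hfix s (ho s))
  · rintro ⟨hsum, hr⟩
    refine ⟨?_, fun s => hrange s (hr s), fun s => horthℓ s (hr s)⟩
    rw [← hsum]
    refine Finset.sum_congr rfl fun s _ => ?_
    rw [hΨℓ]
    exact (hquad s s (Ψ s) (hfixℓ s (hr s)) (hfixℓ s (hr s))).symm
  · rintro ⟨_, hr, ho⟩
    refine Finset.sum_congr rfl fun s _ => Finset.sum_congr rfl fun t _ => ?_
    rw [hΦℓ]
    exact (hquad s t (Φ s t) (hfix s (ho s)) (hfix t (ho t))).symm
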